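/- Let U, V be n×n symmetric positive definite real matrices. Then the mixed discriminant satisfies σ_n(U,…,U,V) ≥ det(U)^{(n-1)/n} · det(V)^{1/n}, where σ_n(U,…,U,V) = (1/n) ∑_{i,j} (∂ det/∂u_{ij})(U) · v_{ij} = (1/n) det(U) · tr(U^{-1} V). -/

import Mathlib

open Matrix Finset
open scoped MatrixOrder

private lemma trace_eq_sum_eigenvalues' {n : ℕ} {A : Matrix (Fin n) (Fin n) ℝ}
    (hA : A.IsHermitian) : A.trace = ∑ i, hA.eigenvalues i := by
  classical
  simpa using hA.trace_eq_sum_eigenvalues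

/-- Gårding's inequality for the mixed discriminant: for symmetric positive
definite `n×n` matrices `U, V`,
`σ_n(U,…,U,V) = (1/n) det(U) tr(U⁻¹V) ≥ det(U)^((n-1)/n) · det(V)^(1/n)`. -/
theorem garding_mixed_discriminant {n : ℕ} (hn : 0 < n)
    (U V : Matrix (Fin n) (Fin n) ℝ)
    (hUsymm : U.IsSymm) (hVsymm : V.IsSymm)
    (hU : U.PosDef) (hV : V.PosDef) :
    U.det ^ (((n : ℝ) - 1) / n) * V.det ^ ((1 : ℝ) / n) ≤
      (1 / n) * U.det * (U⁻¹ * V).trace := by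
  classical
  set S := CFC.sqrt U with hSdef
  have hS : S.PosSemidef := Matrix.nonneg_iff_posSemidef.mp (CFC.sqrt_nonneg U)
  have hSS : S * S = U := CFC.sqrt_mul_sqrt_self U hU.posSemidef.nonneg
  have hdetU : 0 < U.det := hU.det_pos
  have hdetV : 0 < V.det := hV.det_pos
  have hdetS : S.det ≠ 0 := by
    intro h
    rw [← hSS, Matrix.det_mul, h, mul_zero] at hdetU
    exact lt_irrefl _ hdetU
  have hSinv_herm : (S⁻¹).IsHermitian := hS.1.inv
  set M := S⁻¹ * V * S⁻¹ with hMdef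
  have hM : M.PosSemidef := by
    have := hV.posSemidef.mul_mul_conjTranspose_same S⁻¹
    rwa [hSinv_herm.eq] at this
  -- trace identity
  have hUinv : U⁻¹ = S⁻¹ * S⁻¹ := by rw [← hSS, Matrix.mul_inv_rev]
  have htr : (U⁻¹ * V).trace = M.trace := by
    rw [hUinv, hMdef, Matrix.trace_mul_comm (S⁻¹ * V) S⁻¹, ← mul_assoc]
  -- determinant identity
  have hdetM : M.det = V.det / U.det := by
    rw [hMdef, Matrix.det_mul, Matrix.det_mul, Matrix.det_nonsing_inv, ← hSS, Matrix.det_mul]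
    field_simp
    rw [Ring.inverse_eq_inv', ← mul_pow, inv_mul_cancel₀ hdetS, one_pow]
  set μ := hM.1.eigenvalues with hμdef
  have hμnonneg : ∀ i, 0 ≤ μ i := hM.eigenvalues_nonneg
  have htrM : M.trace = ∑ i, μ i := trace_eq_sum_eigenvalues' hM.1
  have hdetMμ : M.det = ∏ i, μ i := by
    simpa using hM.1.det_eq_prod_eigenvalues
  have hnR : (0 : ℝ) < n := by exact_mod_cast hn
  -- AM-GM
  have hamgm : (∏ i, μ i) ^ ((1 : ℝ) / n) ≤ (1 / n) * ∑ i, μ i := by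
    have h1 : ∑ _i : Fin n, (1 : ℝ) / n = 1 := by
      simp [Finset.sum_const, Finset.card_univ]
      field_simp
    have := Real.geom_mean_le_arith_mean_weighted Finset.univ (fun _ => (1 : ℝ) / n) μ
      (fun i _ => by positivity) h1 (fun i _ => hμnonneg i)
    calc (∏ i, μ i) ^ ((1 : ℝ) / n) = ∏ i, μ i ^ ((1 : ℝ) / n) := by
          rw [← Real.finset_prod_rpow _ _ (fun i _ => hμnonneg i)]
      _ ≤ ∑ i, (1 / n : ℝ) * μ i := this
      _ = (1 / n) * ∑ i, μ i := by rw [Finset.mul_sum]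
  -- rewrite LHS
  have hVdet : V.det = U.det * M.det := by rw [hdetM]; field_simp
  have hLHS : U.det ^ (((n : ℝ) - 1) / n) * V.det ^ ((1 : ℝ) / n)
      = U.det * M.det ^ ((1 : ℝ) / n) := by
    rw [hVdet, Real.mul_rpow hdetU.le (by rw [hdetMμ]; exact Finset.prod_nonneg fun i _ => hμnonneg i), ← mul_assoc,
      ← Real.rpow_add hdetU]
    have : ((n : ℝ) - 1) / n + 1 / n = 1 := by field_simp; ring
    rw [this, Real.rpow_one]
  rw [hLHS, htr, htrM, hdetMμ, mul_comm (1/(n:ℝ)) U.det, mul_assoc]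
  exact mul_le_mul_of_nonneg_left hamgm hdetU.le
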